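/- Let e₁, ..., e_k (k > 1) be edges forming a cycle in a trivalent graph G. Then for any i, one of the two mutations along e_i produces a graph in which the edges {e₁, ..., e_k} \ {e_i} form a cycle of length k − 1. -/

import Mathlib

/-!
Common setup: finite (multi)graphs with ordered boundary maps `fst`, `snd`
(the boundary is morally unordered; loops and multiple edges are allowed).
-/

structure TGraph where
  V : Type
  E : Type
  [fintV : Fintype V]
  [fintE : Fintype E]
  [decV : DecidableEq V]
  [decE : DecidableEq E]
  fst : E → V
  snd : E → V

namespace TGraph

variable (G : TGraph)

instance : Fintype G.V := G.fintV
instance : Fintype G.E := G.fintE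
instance : DecidableEq G.V := G.decV
instance : DecidableEq G.E := G.decE

/-- Number of endpoints of `e` equal to `v` (a loop counts twice). -/
def mult (v : G.V) (e : G.E) : ℕ :=
  (if G.fst e = v then 1 else 0) + (if G.snd e = v then 1 else 0)

/-- Valency of a vertex (a loop contributes two). -/
def degree (v : G.V) : ℕ := ∑ e, G.mult v e

/-- A leaf is a vertex incident to exactly one edge (valency one). -/
def IsLeaf (v : G.V) : Prop := G.degree v = 1

instance : DecidablePred G.IsLeaf := fun v => inferInstanceAs (Decidable (G.degree v = 1))

/-- A graph is trivalent when every non-leaf vertex has valency three. -/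
def Trivalent : Prop := ∀ v, G.degree v = 1 ∨ G.degree v = 3

/-- The number of leaves. -/
def numLeaves : ℕ := Fintype.card {v : G.V // G.IsLeaf v}

/-- The number of inner (non-leaf) vertices. -/
def numInner : ℕ := Fintype.card {v : G.V // ¬ G.IsLeaf v}

/-- The number of connected components. -/
noncomputable def components : ℕ :=
  Nat.card (Quot fun v w : G.V =>
    ∃ e, (G.fst e = v ∧ G.snd e = w) ∨ (G.fst e = w ∧ G.snd e = v))

/-- The first Betti number, computed via the Euler characteristic:
`g = |E| - |V| + c`. -/
noncomputable def betti : ℤ := (Fintype.card G.E : ℤ) - Fintype.card G.V + G.components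

/-- The value of the vertex functional `v = Σ_{e ∋ v} e*` on an edge labeling. -/
def vsum (v : G.V) (u : G.E → ℤ) : ℤ := ∑ e, (G.mult v e : ℤ) * u e

/-- Membership in the graded lattice `M^gr = ℤ ⊕ M`: the edge labeling has even
sum at every inner vertex. -/
def InMgr (ω : ℤ × (G.E → ℤ)) : Prop :=
  ∀ v, ¬ G.IsLeaf v → Even (G.vsum v ω.2)

/-- Membership in the graded cone `τ(G) ⊂ ℤ ⊕ M`: nonnegative degree and edge
values, parity at inner vertices, the triangle inequalities at every inner
vertex (encoded as: twice each incident value is at most the local sum), and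
the degree bound `deg ω ≥ deg_v ω` at every inner vertex. -/
def InCone (ω : ℤ × (G.E → ℤ)) : Prop :=
  0 ≤ ω.1 ∧ (∀ e, 0 ≤ ω.2 e) ∧
  ∀ v, ¬ G.IsLeaf v →
    Even (G.vsum v ω.2) ∧
    (∀ e, G.mult v e ≠ 0 → 2 * ω.2 e ≤ G.vsum v ω.2) ∧
    G.vsum v ω.2 ≤ 2 * ω.1

/-- A network: a 0-1 edge labeling with even local sum at every inner vertex.
For trivalent graphs this is exactly a disjoint union of leaf-to-leaf
edge-paths and cycles. -/
def IsNetwork (u : G.E → ℤ) : Prop :=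
  (∀ e, u e = 0 ∨ u e = 1) ∧ ∀ v, ¬ G.IsLeaf v → Even (G.vsum v u)

end TGraph

namespace TGraph

/-- The endpoint of `e` selected by `s`. -/
def endAt (G : TGraph) (e : G.E) (s : Bool) : G.V := if s then G.snd e else G.fst e

/-- Reattachment used in a mutation: the `sa`-endpoint of `a` and the
`sb`-endpoint of `b` are exchanged. -/
def mutate (G : TGraph) (a b : G.E) (sa sb : Bool) : TGraph where
  V := G.V
  E := G.E
  fst := fun e =>
    if e = a then (if sa then G.fst a else G.endAt b sb)
    else if e = b then (if sb then G.fst b else G.endAt a sa)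
    else G.fst e
  snd := fun e =>
    if e = a then (if sa then G.endAt b sb else G.snd a)
    else if e = b then (if sb then G.endAt a sa else G.snd b)
    else G.snd e

/-- `G'` is obtained from `G` by a mutation along the internal non-loop edge
`e`: an edge `a` attached at `∂₁ e` and an edge `b` attached at `∂₂ e` exchange
these endpoints. -/
def MutationAlong (G : TGraph) (e : G.E) (G' : TGraph) : Prop :=
  ∃ (a b : G.E) (sa sb : Bool), a ≠ e ∧ b ≠ e ∧ a ≠ b ∧
    G.endAt a sa = G.fst e ∧ G.endAt b sb = G.snd e ∧
    G.fst e ≠ G.snd e ∧ ¬ G.IsLeaf (G.fst e) ∧ ¬ G.IsLeaf (G.snd e) ∧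
    G' = G.mutate a b sa sb

end TGraph

/-- Cyclic successor on `Fin k`. -/
def cnext {k : ℕ} (i : Fin k) : Fin k := ⟨(i.val + 1) % k, Nat.mod_lt _ i.pos⟩

namespace TGraph

/-- A cycle of length `k`: distinct edges `e i` joining distinct vertices `v i`
and `v (i+1)` cyclically. -/
def IsCycle (G : TGraph) {k : ℕ} (e : Fin k → G.E) (v : Fin k → G.V) : Prop :=
  Function.Injective e ∧ Function.Injective v ∧
  ∀ i, (G.fst (e i) = v i ∧ G.snd (e i) = v (cnext i)) ∨
       (G.fst (e i) = v (cnext i) ∧ G.snd (e i) = v i)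

end TGraph


namespace TGraph

lemma mutate_fst_snd_of_ne (G : TGraph) (a b : G.E) (sa sb : Bool) (x : G.E)
    (hxa : x ≠ a) (hxb : x ≠ b) :
    (G.mutate a b sa sb).fst x = G.fst x ∧ (G.mutate a b sa sb).snd x = G.snd x := by
  simp [mutate, hxa, hxb]

lemma mutate_ends_a (G : TGraph) (a b : G.E) (sa sb : Bool) (q r : G.V)
    (h1 : G.endAt a (!sa) = r) (h2 : G.endAt b sb = q) :
    ((G.mutate a b sa sb).fst a = r ∧ (G.mutate a b sa sb).snd a = q) ∨
    ((G.mutate a b sa sb).fst a = q ∧ (G.mutate a b sa sb).snd a = r) := by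
  cases sa with
  | true =>
    exact Or.inl ⟨by simpa [mutate, endAt] using h1, by simpa [mutate, endAt] using h2⟩
  | false =>
    exact Or.inr ⟨by simpa [mutate, endAt] using h2, by simpa [mutate, endAt] using h1⟩

lemma mutate_ends_b (G : TGraph) (a b : G.E) (sa sb : Bool) (hab : b ≠ a) (q r : G.V)
    (h1 : G.endAt b (!sb) = r) (h2 : G.endAt a sa = q) :
    ((G.mutate a b sa sb).fst b = r ∧ (G.mutate a b sa sb).snd b = q) ∨
    ((G.mutate a b sa sb).fst b = q ∧ (G.mutate a b sa sb).snd b = r) := by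
  cases sb with
  | true =>
    exact Or.inl ⟨by simpa [mutate, endAt, hab] using h1, by simpa [mutate, endAt, hab] using h2⟩
  | false =>
    exact Or.inr ⟨by simpa [mutate, endAt, hab] using h2, by simpa [mutate, endAt, hab] using h1⟩

end TGraph

/-- If `e 0, ..., e (k-1)` form a cycle of length `k > 1` in a
trivalent graph `G`, then for any `i` one of the mutations along `e i` yields a
graph in which the remaining edges form a cycle of length `k - 1`. -/
theorem mutation_shortens_cycle (G : TGraph) (hG : G.Trivalent) (k : ℕ) (hk : 1 < k)
    (e : Fin k → G.E) (v : Fin k → G.V) (hcyc : G.IsCycle e v) (i : Fin k) :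
    ∃ (a b : G.E) (sa sb : Bool),
      G.MutationAlong (e i) (G.mutate a b sa sb) ∧
      ∃ (e' : Fin (k - 1) → G.E) (v' : Fin (k - 1) → G.V),
        (G.mutate a b sa sb).IsCycle e' v' ∧
        ∀ j, ∃ j' : Fin k, j' ≠ i ∧ e' j = e j' := by
  obtain ⟨m, rfl⟩ : ∃ m, k = m + 2 := ⟨k - 2, by omega⟩
  simp only [TGraph.IsCycle] at hcyc
  obtain ⟨einj, vinj, hor⟩ := hcyc
  -- basic Fin facts
  have hcn : ∀ x : Fin (m+2), cnext x = x + 1 := by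
    intro x; apply Fin.ext; simp [cnext, Fin.add_def]
  have hone : (1 : Fin (m+2)) ≠ 0 := by simp [Fin.ext_iff]
  have hne_succ : ∀ x : Fin (m+2), x ≠ x + 1 := by
    intro x h
    have h0 : x + 0 = x + 1 := by simpa using h
    exact hone (add_left_cancel h0).symm
  have hvne : ∀ x : Fin (m+2), v x ≠ v (x+1) := fun x h => hne_succ x (vinj h)
  have hor' : ∀ x, (G.fst (e x) = v x ∧ G.snd (e x) = v (x+1)) ∨
      (G.fst (e x) = v (x+1) ∧ G.snd (e x) = v x) := by
    intro x; rw [← hcn x]; exact hor x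
  have hEne : ∀ x y : Fin (m+2), x ≠ y → e x ≠ e y := fun x y hxy h => hxy (einj h)
  -- multiplicity facts
  have hmult1 : ∀ x : Fin (m+2), G.mult (v x) (e x) = 1 := by
    intro x
    have hxx : v (x+1) ≠ v x := (hvne x).symm
    rcases hor' x with ⟨h1, h2⟩ | ⟨h1, h2⟩ <;> simp [TGraph.mult, h1, h2, hxx, hvne x]
  have hmult1' : ∀ x : Fin (m+2), G.mult (v (x+1)) (e x) = 1 := by
    intro x
    have hxx : v (x+1) ≠ v x := (hvne x).symm
    rcases hor' x with ⟨h1, h2⟩ | ⟨h1, h2⟩ <;> simp [TGraph.mult, h1, h2, hxx, hvne x]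
  have hinc : ∀ (x : Fin (m+2)) (w : G.V), G.mult w (e x) ≠ 0 → w = v x ∨ w = v (x+1) := by
    intro x w h
    by_contra hcon
    push_neg at hcon
    apply h
    rcases hor' x with ⟨h1, h2⟩ | ⟨h1, h2⟩ <;>
      simp [TGraph.mult, h1, h2, Ne.symm hcon.1, Ne.symm hcon.2]
  -- degrees
  have hdeg2 : ∀ x : Fin (m+2), 2 ≤ G.degree (v x) := by
    intro x
    have hx1 : x - 1 + 1 = x := by abel
    have hxne : x ≠ x - 1 := fun h => hne_succ (x-1) (h.symm.trans hx1.symm)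
    have hne' : e x ≠ e (x - 1) := hEne _ _ hxne
    have hmA : G.mult (v x) (e x) = 1 := hmult1 x
    have hmB : G.mult (v x) (e (x-1)) = 1 := by
      have := hmult1' (x-1); rwa [hx1] at this
    have h2 : (2 : ℕ) = ∑ yy ∈ ({e x, e (x-1)} : Finset G.E), G.mult (v x) yy := by
      rw [Finset.sum_pair hne', hmA, hmB]
    simp only [TGraph.degree]
    rw [h2]
    exact Finset.sum_le_sum_of_subset (Finset.subset_univ _)
  have hnleaf : ∀ x : Fin (m+2), ¬ G.IsLeaf (v x) := by
    intro x h
    have := hdeg2 x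
    rw [TGraph.IsLeaf] at h
    omega
  have hdeg3 : ∀ x : Fin (m+2), G.degree (v x) = 3 := by
    intro x
    rcases hG (v x) with h | h
    · exact absurd h (hnleaf x)
    · exact h
  -- existence of the third edge y at v (i+1)
  have hpair : e i ≠ e (i+1) := hEne _ _ (hne_succ i)
  obtain ⟨y, hy1, hy2, hy3⟩ :
      ∃ y : G.E, y ≠ e i ∧ y ≠ e (i+1) ∧ G.mult (v (i+1)) y ≠ 0 := by
    by_contra hcon
    push_neg at hcon
    have hEq : ∑ yy ∈ ({e i, e (i+1)} : Finset G.E), G.mult (v (i+1)) yy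
        = G.degree (v (i+1)) := by
      simp only [TGraph.degree]
      apply Finset.sum_subset (Finset.subset_univ _)
      intro yy _ hyy
      simp only [Finset.mem_insert, Finset.mem_singleton, not_or] at hyy
      exact hcon yy hyy.1 hyy.2
    rw [Finset.sum_pair hpair, hmult1' i, hmult1 (i+1), hdeg3 (i+1)] at hEq
    omega
  have hynr : ∀ x : Fin (m+2), y ≠ e x := by
    intro x hyx
    rcases hinc x (v (i+1)) (by rw [← hyx]; exact hy3) with h | h
    · exact hy2 (hyx.trans (congrArg e (vinj h).symm))
    · exact hy1 (hyx.trans (congrArg e (add_right_cancel (vinj h)).symm))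
  -- endpoint selectors
  obtain ⟨sy, hsy⟩ : ∃ s : Bool, G.endAt y s = v (i+1) := by
    by_cases hf : G.fst y = v (i+1)
    · exact ⟨false, by simpa [TGraph.endAt] using hf⟩
    · have hs : G.snd y = v (i+1) := by
        by_contra hs
        exact hy3 (by simp [TGraph.mult, hf, hs])
      exact ⟨true, by simpa [TGraph.endAt] using hs⟩
  have hi1 : i - 1 + 1 = i := by abel
  obtain ⟨sp, hsp1, hsp2⟩ :
      ∃ s : Bool, G.endAt (e (i-1)) s = v i ∧ G.endAt (e (i-1)) (!s) = v (i-1) := by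
    have h := hor' (i-1)
    rw [hi1] at h
    rcases h with ⟨h1, h2⟩ | ⟨h1, h2⟩
    · exact ⟨true, by simpa [TGraph.endAt] using h2, by simpa [TGraph.endAt] using h1⟩
    · exact ⟨false, by simpa [TGraph.endAt] using h1, by simpa [TGraph.endAt] using h2⟩
  have hane : e (i-1) ≠ e i := hEne _ _ (fun h => hne_succ (i-1) (h.trans hi1.symm))
  have haney : e (i-1) ≠ y := fun h => hynr (i-1) h.symm
  -- the common cycle-building step
  suffices hsuf : ∀ (a b : G.E) (sa sb : Bool),
      (∀ x, x ≠ e (i-1) → x ≠ y →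
        (G.mutate a b sa sb).fst x = G.fst x ∧ (G.mutate a b sa sb).snd x = G.snd x) →
      ((((G.mutate a b sa sb).fst (e (i-1)) = v (i-1) ∧
         (G.mutate a b sa sb).snd (e (i-1)) = v (i+1)) ∨
        ((G.mutate a b sa sb).fst (e (i-1)) = v (i+1) ∧
         (G.mutate a b sa sb).snd (e (i-1)) = v (i-1)))) →
      ∃ (e' : Fin (m + 1) → G.E) (v' : Fin (m + 1) → G.V),
        (G.mutate a b sa sb).IsCycle e' v' ∧
        ∀ j, ∃ j' : Fin (m+2), j' ≠ i ∧ e' j = e j' by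
    rcases hor' i with ⟨hA1, hA2⟩ | ⟨hB1, hB2⟩
    · refine ⟨e (i-1), y, sp, sy, ?_, ?_⟩
      · exact ⟨e (i-1), y, sp, sy, hane, hy1, haney,
          hsp1.trans hA1.symm, hsy.trans hA2.symm,
          by rw [hA1, hA2]; exact hvne i,
          by rw [hA1]; exact hnleaf i,
          by rw [hA2]; exact hnleaf (i+1), rfl⟩
      · apply hsuf
        · intro x h1 h2
          exact G.mutate_fst_snd_of_ne _ _ _ _ x h1 h2
        · exact G.mutate_ends_a (e (i-1)) y sp sy (v (i+1)) (v (i-1)) hsp2 hsy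
    · refine ⟨y, e (i-1), sy, sp, ?_, ?_⟩
      · exact ⟨y, e (i-1), sy, sp, hy1, hane, hynr (i-1),
          hsy.trans hB1.symm, hsp1.trans hB2.symm,
          by rw [hB1, hB2]; exact (hvne i).symm,
          by rw [hB1]; exact hnleaf (i+1),
          by rw [hB2]; exact hnleaf i, rfl⟩
      · apply hsuf
        · intro x h1 h2
          exact G.mutate_fst_snd_of_ne _ _ _ _ x h2 h1
        · exact G.mutate_ends_b y (e (i-1)) sy sp haney (v (i+1)) (v (i-1)) hsp2 hsy
  -- proof of hsuf
  intro a b sa sb hunch hmoved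
  have hfinj : ∀ j1 j2 : Fin (m+1), i + 1 + j1.castSucc = i + 1 + j2.castSucc → j1 = j2 := by
    intro j1 j2 h
    exact Fin.castSucc_injective _ (add_left_cancel h)
  have hW1 : ∀ j : Fin (m+1), i + 1 + j.castSucc ≠ i := by
    intro j h
    have h2 : (1 : Fin (m+2)) + j.castSucc = 0 := by
      apply add_left_cancel (a := i)
      rw [← add_assoc, add_zero]
      exact h
    have h3 : (1 + j.val) % (m+2) = 0 := by
      have := congrArg Fin.val h2
      simpa [Fin.add_def] using this
    rw [Nat.mod_eq_of_lt (by omega)] at h3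
    omega
  have hW2 : ∀ j : Fin (m+1), j.val = m → i + 1 + j.castSucc = i - 1 := by
    intro j hj
    rw [eq_sub_iff_add_eq]
    have hz : (1 : Fin (m+2)) + j.castSucc + 1 = 0 := by
      apply Fin.ext
      simp only [Fin.add_def, Fin.val_one, Fin.coe_castSucc, Fin.val_zero, hj]
      rw [Nat.mod_eq_of_lt (show 1 + m < m + 2 by omega)]
      rw [show 1 + m + 1 = m + 2 from by omega]
      exact Nat.mod_self _
    calc i + 1 + j.castSucc + 1 = i + (1 + j.castSucc + 1) := by abel
      _ = i + 0 := by rw [hz]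
      _ = i := add_zero i
  have hW3 : ∀ j : Fin (m+1), j.val < m → (cnext j).castSucc = j.castSucc + (1 : Fin (m+2)) := by
    intro j hj
    apply Fin.ext
    simp only [Fin.coe_castSucc, cnext, Fin.add_def, Fin.val_one]
    rw [Nat.mod_eq_of_lt (show j.val + 1 < m + 1 by omega),
        Nat.mod_eq_of_lt (show j.val + 1 < m + 2 by omega)]
  refine ⟨fun j => e (i + 1 + j.castSucc), fun j => v (i + 1 + j.castSucc), ⟨?_, ?_, ?_⟩, ?_⟩
  · intro j1 j2 h
    exact hfinj j1 j2 (einj h)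
  · intro j1 j2 h
    exact hfinj j1 j2 (vinj h)
  · intro j
    show ((G.mutate a b sa sb).fst (e (i + 1 + j.castSucc)) = v (i + 1 + j.castSucc) ∧
          (G.mutate a b sa sb).snd (e (i + 1 + j.castSucc)) = v (i + 1 + (cnext j).castSucc)) ∨
         ((G.mutate a b sa sb).fst (e (i + 1 + j.castSucc)) = v (i + 1 + (cnext j).castSucc) ∧
          (G.mutate a b sa sb).snd (e (i + 1 + j.castSucc)) = v (i + 1 + j.castSucc))
    by_cases hj : j.val = m
    · -- the relocated edge e (i-1)
      have hfj : i + 1 + j.castSucc = i - 1 := hW2 j hj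
      have hcj : cnext j = ⟨0, by omega⟩ := by
        apply Fin.ext
        simp only [cnext, hj]
        exact Nat.mod_self _
      have hfc : i + 1 + ((⟨0, by omega⟩ : Fin (m+1)).castSucc) = i + 1 := by
        have h0 : ((⟨0, by omega⟩ : Fin (m+1)).castSucc) = (0 : Fin (m+2)) := by
          apply Fin.ext; simp
        rw [h0, add_zero]
      rw [hcj]
      rcases hmoved with ⟨h1, h2⟩ | ⟨h1, h2⟩
      · left
        constructor
        · rw [hfj]; exact h1
        · rw [hfj, hfc]; exact h2
      · right
        constructor
        · rw [hfj, hfc]; exact h1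
        · rw [hfj]; exact h2
    · -- unchanged edges
      have hjm : j.val < m := lt_of_le_of_ne (by omega) hj
      have hfne1 : e (i + 1 + j.castSucc) ≠ e (i - 1) := by
        intro h
        have hlast : i + 1 + ((⟨m, by omega⟩ : Fin (m+1)).castSucc) = i - 1 :=
          hW2 ⟨m, by omega⟩ rfl
        have := hfinj j ⟨m, by omega⟩ ((einj h).trans hlast.symm)
        exact hj (by rw [this])
      have hfne2 : e (i + 1 + j.castSucc) ≠ y := fun h => hynr _ h.symm
      obtain ⟨hfst, hsnd⟩ := hunch (e (i + 1 + j.castSucc)) hfne1 hfne2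
      have hcnx : i + 1 + (cnext j).castSucc = (i + 1 + j.castSucc) + 1 := by
        rw [hW3 j hjm]; abel
      rcases hor' (i + 1 + j.castSucc) with ⟨h1, h2⟩ | ⟨h1, h2⟩
      · left
        exact ⟨by rw [hfst, h1], by rw [hsnd, h2, hcnx]⟩
      · right
        exact ⟨by rw [hfst, h1, hcnx], by rw [hsnd, h2]⟩
  · intro j
    exact ⟨i + 1 + j.castSucc, hW1 j, rfl⟩
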